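/- Then (i) sup_{t>=1} Delta_t < infinity, and (ii) there exists a constant C < infinity, depending only on (K_0, kappa, varkappa, Ctilde_3, Delta_1, sup_t Delta_t), such that for every t >= 1, Delta_{t+1} <= ( prod_{s=2}^{t} (1 - K_0*eta_s) ) * Delta_1 + C * eta_t. -/

import Mathlib

set_option maxHeartbeats 1000000


/-- stability and convergence rate of a nonnegative real sequence
`Δ_t` satisfying the SAMCMC recursion-type inequality. -/
theorem stmt11
    (K0 vk κ Ct0 Ct1 Ct3 : ℝ)
    (hK0 : 0 < K0) (hK0' : K0 ≤ 1)
    (hvk : 0 < vk) (hvk' : vk ≤ K0 / 2) (hκ : 1 ≤ κ)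
    (hCt0 : 0 ≤ Ct0) (hCt1 : 0 ≤ Ct1) (hCt3 : 0 ≤ Ct3)
    (η : ℕ → ℝ)
    (hηpos : ∀ t, 1 ≤ t → 0 < η t)
    (hηmono : ∀ t, 1 ≤ t → η (t + 1) ≤ η t)
    -- η_t ≤ K0 / Ct1, with the convention K0 / Ct1 = ∞ if Ct1 = 0
    (hηb1 : ∀ t, 1 ≤ t → η t * Ct1 ≤ K0)
    (hηb2 : ∀ t, 1 ≤ t → η t ≤ K0 / (vk + 3 * K0))
    (hηvar : ∀ t, 2 ≤ t → |1 / η t - 1 / η (t - 1)| ≤ vk)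
    (hηκ : ∀ t, 2 ≤ t → η (t - 1) ≤ κ * η t)
    (hsum : Summable (fun t : ℕ => η (t + 1) ^ 2))
    (Δ : ℕ → ℝ)
    (hΔnn : ∀ t, 1 ≤ t → 0 ≤ Δ t)
    (hΔ1 : Δ 1 ≤ Ct0)
    (hrecur : ∀ t, 1 ≤ t →
      Δ (t + 1) ≤ (∏ s ∈ Finset.Icc 1 t, (1 - 2 * η s * K0)) * Ct0
        + (∑ s ∈ Finset.Icc 2 t,
            η (s - 1) * η s * (∏ r ∈ Finset.Icc (s + 1) t, (1 - 2 * η r * K0)) *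
              (Ct1 * Δ s + (vk + K0) * Δ (s - 1)))
        + η t * (Δ t + Ct3)) :
    (∃ M : ℝ, ∀ t, 1 ≤ t → Δ t ≤ M) ∧
    (∃ C : ℝ, ∀ t, 1 ≤ t →
      Δ (t + 1) ≤ (∏ s ∈ Finset.Icc 2 t, (1 - K0 * η s)) * Δ 1 + C * η t) := by
    -- basic bounds on η
  have hηub : ∀ t, 1 ≤ t → η t ≤ 1/3 := by
    intro t ht
    have h := hηb2 t ht
    have hd : 0 < vk + 3 * K0 := by linarith
    have h2 : K0 / (vk + 3 * K0) ≤ 1/3 := by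
      rw [div_le_div_iff₀ hd (by norm_num)]; linarith
    linarith
  have hfpos : ∀ s, 1 ≤ s → 0 < 1 - 2 * η s * K0 := by
    intro s hs
    have h1 := hηub s hs
    have h2 := (hηpos s hs).le
    nlinarith
  have hf2le : ∀ s, 1 ≤ s → 1 - 2 * η s * K0 ≤ 1 - K0 * η s := by
    intro s hs
    nlinarith [(hηpos s hs).le, hK0.le]
  have hf1pos : ∀ s, 1 ≤ s → 0 < 1 - K0 * η s := by
    intro s hs
    have := hfpos s hs
    have := hf2le s hs
    linarith
  have hf1le1 : ∀ s, 1 ≤ s → 1 - K0 * η s ≤ 1 := by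
    intro s hs
    nlinarith [(hηpos s hs).le, hK0.le]
  have hP1pos : ∀ m t : ℕ, 1 ≤ m → 0 < ∏ s ∈ Finset.Icc m t, (1 - K0 * η s) := by
    intro m t hm
    exact Finset.prod_pos fun s hs => hf1pos s (le_trans hm (Finset.mem_Icc.mp hs).1)
  have hP1le1 : ∀ t : ℕ, ∏ s ∈ Finset.Icc 2 t, (1 - K0 * η s) ≤ 1 := by
    intro t
    exact Finset.prod_le_one
      (fun i hi => (hf1pos i (le_trans (by norm_num) (Finset.mem_Icc.mp hi).1)).le)
      (fun i hi => hf1le1 i (le_trans (by norm_num) (Finset.mem_Icc.mp hi).1))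
  have hmono2 : ∀ m t : ℕ, 1 ≤ m → m ≤ t → η t ≤ η m := by
    intro m t hm hmt
    induction t, hmt using Nat.le_induction with
    | base => exact le_refl _
    | succ t ht ih => exact le_trans (hηmono t (by omega)) ih
  have hslow : ∀ t, 1 ≤ t → η t * (1 - vk * η (t+1)) ≤ η (t+1) := by
    intro t ht
    have h := (abs_le.mp (hηvar (t+1) (by omega))).2
    simp only [Nat.add_sub_cancel] at h
    have h1 : 0 < η t := hηpos t ht
    have h2 : 0 < η (t+1) := hηpos _ (by omega)
    have e : η t * η (t+1) * (1/η (t+1) - 1/η t) = η t - η (t+1) := by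
      field_simp
    nlinarith [mul_le_mul_of_nonneg_left h (le_of_lt (mul_pos h1 h2))]
  have hstep2 : ∀ t, 1 ≤ t → η t * (1 - 2 * η (t+1) * K0) ≤ η (t+1) * (1 - K0 * η (t+1)) := by
    intro t ht
    have h1 := hslow t ht
    have h2 := hηmono t ht
    have h3 := (hηpos (t+1) (by omega)).le
    have h4 := (hηpos t ht).le
    nlinarith [mul_nonneg (mul_nonneg (sub_nonneg.mpr h2) (by linarith : (0:ℝ) ≤ 2*K0 - vk)) h3,
      mul_nonneg (mul_nonneg h3 h3) (by linarith : (0:ℝ) ≤ K0 - vk)]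
  have hstepK : ∀ t, 1 ≤ t → η t * (1 - K0 * η (t+1)) ≤ η (t+1) := by
    intro t ht
    have h1 := hslow t ht
    have h3 := (hηpos (t+1) (by omega)).le
    have h4 := (hηpos t ht).le
    nlinarith [mul_nonneg (mul_nonneg h4 h3) (by linarith : (0:ℝ) ≤ K0 - vk)]
  -- Lemma A
  have hA : ∀ s, 2 ≤ s → ∀ t, s ≤ t →
      η s * ∏ r ∈ Finset.Icc (s+1) t, (1 - 2 * η r * K0)
        ≤ η t * ∏ r ∈ Finset.Icc (s+1) t, (1 - K0 * η r) := by
    intro s hs t hst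
    induction t, hst using Nat.le_induction with
    | base =>
      rw [Finset.Icc_eq_empty (by omega : ¬ s + 1 ≤ s)]
      simp
    | succ t ht ih =>
      rw [Finset.prod_Icc_succ_top (by omega), Finset.prod_Icc_succ_top (by omega)]
      calc η s * ((∏ r ∈ Finset.Icc (s+1) t, (1 - 2 * η r * K0)) * (1 - 2 * η (t+1) * K0))
          = (η s * ∏ r ∈ Finset.Icc (s+1) t, (1 - 2 * η r * K0)) * (1 - 2 * η (t+1) * K0) := by
            ring
        _ ≤ (η t * ∏ r ∈ Finset.Icc (s+1) t, (1 - K0 * η r)) * (1 - 2 * η (t+1) * K0) := by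
            exact mul_le_mul_of_nonneg_right ih (hfpos (t+1) (by omega)).le
        _ = (η t * (1 - 2 * η (t+1) * K0)) * ∏ r ∈ Finset.Icc (s+1) t, (1 - K0 * η r) := by
            ring
        _ ≤ (η (t+1) * (1 - K0 * η (t+1))) * ∏ r ∈ Finset.Icc (s+1) t, (1 - K0 * η r) := by
            exact mul_le_mul_of_nonneg_right (hstep2 t (by omega)) (hP1pos (s+1) t (by omega)).le
        _ = η (t+1) * ((∏ r ∈ Finset.Icc (s+1) t, (1 - K0 * η r)) * (1 - K0 * η (t+1))) := by
            ring
  -- Lemma B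
  have hB : ∀ t, 1 ≤ t →
      ∑ s ∈ Finset.Icc 2 t, η s * ∏ r ∈ Finset.Icc (s+1) t, (1 - K0 * η r) ≤ 1 / K0 := by
    intro t ht
    induction t, ht using Nat.le_induction with
    | base =>
      rw [Finset.Icc_eq_empty (by omega), Finset.sum_empty]
      positivity
    | succ t ht ih =>
      rw [Finset.sum_Icc_succ_top (by omega)]
      have hrw : ∀ s ∈ Finset.Icc 2 t,
          η s * ∏ r ∈ Finset.Icc (s+1) (t+1), (1 - K0 * η r)
            = (η s * ∏ r ∈ Finset.Icc (s+1) t, (1 - K0 * η r)) * (1 - K0 * η (t+1)) := by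
        intro s hs
        have hst := (Finset.mem_Icc.mp hs).2
        rw [Finset.prod_Icc_succ_top (by omega : s + 1 ≤ t + 1)]
        ring
      rw [Finset.sum_congr rfl hrw, ← Finset.sum_mul,
        Finset.Icc_eq_empty (by omega : ¬ t + 1 + 1 ≤ t + 1), Finset.prod_empty, mul_one]
      have hSnn : 0 ≤ ∑ s ∈ Finset.Icc 2 t, η s * ∏ r ∈ Finset.Icc (s+1) t, (1 - K0 * η r) := by
        apply Finset.sum_nonneg
        intro s hs
        exact mul_nonneg (hηpos s (le_trans (by norm_num) (Finset.mem_Icc.mp hs).1)).le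
          (hP1pos (s+1) t (by omega)).le
      have hfp := hf1pos (t+1) (by omega)
      have hηp := hηpos (t+1) (by omega)
      have hinv : K0 * (1 / K0) = 1 := by field_simp
      nlinarith [mul_nonneg (by linarith : (0:ℝ) ≤ 1/K0 - ∑ s ∈ Finset.Icc 2 t, η s * ∏ r ∈ Finset.Icc (s+1) t, (1 - K0 * η r)) hfp.le]
  -- Lemma C
  have hC : ∀ t, 1 ≤ t → ∏ s ∈ Finset.Icc 2 t, (1 - K0 * η s) ≤ η t / η 1 := by
    intro t ht
    induction t, ht using Nat.le_induction with
    | base =>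
      rw [Finset.Icc_eq_empty (by omega), Finset.prod_empty,
        div_self (hηpos 1 le_rfl).ne']
    | succ t ht ih =>
      rw [Finset.prod_Icc_succ_top (by omega)]
      have h1 : (∏ s ∈ Finset.Icc 2 t, (1 - K0 * η s)) * (1 - K0 * η (t+1))
          ≤ (η t / η 1) * (1 - K0 * η (t+1)) :=
        mul_le_mul_of_nonneg_right ih (hf1pos (t+1) (by omega)).le
      have h2 : (η t / η 1) * (1 - K0 * η (t+1)) ≤ η (t+1) / η 1 := by
        rw [div_mul_eq_mul_div, div_le_div_iff₀ (hηpos 1 le_rfl) (hηpos 1 le_rfl)]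
        exact mul_le_mul_of_nonneg_right (hstepK t ht) (hηpos 1 le_rfl).le
      linarith
  -- comparison of leading products
  have hG1le : ∀ t, 1 ≤ t →
      ∏ s ∈ Finset.Icc 1 t, (1 - 2 * η s * K0) ≤ ∏ s ∈ Finset.Icc 2 t, (1 - K0 * η s) := by
    intro t ht
    have hins : Finset.Icc 1 t = insert 1 (Finset.Icc 2 t) := by
      ext x; simp only [Finset.mem_Icc, Finset.mem_insert]; omega
    rw [hins, Finset.prod_insert (by simp)]
    have hle : ∏ s ∈ Finset.Icc 2 t, (1 - 2 * η s * K0) ≤ ∏ s ∈ Finset.Icc 2 t, (1 - K0 * η s) :=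
      Finset.prod_le_prod
        (fun i hi => (hfpos i (le_trans (by norm_num) (Finset.mem_Icc.mp hi).1)).le)
        (fun i hi => hf2le i (le_trans (by norm_num) (Finset.mem_Icc.mp hi).1))
    have h1 : 1 - 2 * η 1 * K0 ≤ 1 := by nlinarith [(hηpos 1 le_rfl).le, hK0.le]
    have hnn : 0 ≤ ∏ s ∈ Finset.Icc 2 t, (1 - 2 * η s * K0) :=
      Finset.prod_nonneg fun i hi => (hfpos i (le_trans (by norm_num) (Finset.mem_Icc.mp hi).1)).le
    calc (1 - 2 * η 1 * K0) * ∏ s ∈ Finset.Icc 2 t, (1 - 2 * η s * K0)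
        ≤ 1 * ∏ s ∈ Finset.Icc 2 t, (1 - K0 * η s) :=
          mul_le_mul h1 hle hnn (by norm_num)
      _ = ∏ s ∈ Finset.Icc 2 t, (1 - K0 * η s) := one_mul _
  -- master inequality
  have hmaster : ∀ t, 1 ≤ t → ∀ M, 0 ≤ M → (∀ s, 1 ≤ s → s ≤ t → Δ s ≤ M) →
      Δ (t+1) ≤ (∏ s ∈ Finset.Icc 2 t, (1 - K0 * η s)) * Ct0
        + (κ * (Ct1 + (vk + K0)) * M / K0 + M + Ct3) * η t := by
    intro t ht M hM hsM
    have hr := hrecur t ht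
    have hsum1 : ∑ s ∈ Finset.Icc 2 t,
          η (s - 1) * η s * (∏ r ∈ Finset.Icc (s + 1) t, (1 - 2 * η r * K0)) *
            (Ct1 * Δ s + (vk + K0) * Δ (s - 1))
        ≤ ∑ s ∈ Finset.Icc 2 t,
            κ * (Ct1 + (vk + K0)) * M * η t * (η s * ∏ r ∈ Finset.Icc (s+1) t, (1 - K0 * η r)) := by
      apply Finset.sum_le_sum
      intro s hs
      obtain ⟨hs2, hst⟩ := Finset.mem_Icc.mp hs
      have hs1 : 1 ≤ s := by omega
      have hsm1 : 1 ≤ s - 1 := by omega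
      have hDs := hsM s hs1 hst
      have hDs1 := hsM (s-1) hsm1 (by omega)
      have hDsnn := hΔnn s hs1
      have hDs1nn := hΔnn (s-1) hsm1
      have hbX : Ct1 * Δ s + (vk + K0) * Δ (s-1) ≤ (Ct1 + (vk + K0)) * M := by nlinarith
      have hXnn : 0 ≤ Ct1 * Δ s + (vk + K0) * Δ (s-1) := by nlinarith
      have hκs := hηκ s hs2
      have hAs := hA s hs2 t hst
      have hbnn : 0 ≤ η s := (hηpos s hs1).le
      have hP2nn : 0 ≤ ∏ r ∈ Finset.Icc (s+1) t, (1 - 2 * η r * K0) :=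
        Finset.prod_nonneg fun i hi => (hfpos i (le_trans (by omega) (Finset.mem_Icc.mp hi).1)).le
      have hP1nn : 0 ≤ ∏ r ∈ Finset.Icc (s+1) t, (1 - K0 * η r) := (hP1pos (s+1) t (by omega)).le
      have hκbnn : 0 ≤ κ * η s := mul_nonneg (by linarith) hbnn
      calc η (s - 1) * η s * (∏ r ∈ Finset.Icc (s + 1) t, (1 - 2 * η r * K0)) *
              (Ct1 * Δ s + (vk + K0) * Δ (s - 1))
          = (η s * (∏ r ∈ Finset.Icc (s + 1) t, (1 - 2 * η r * K0)) *
              (Ct1 * Δ s + (vk + K0) * Δ (s - 1))) * η (s-1) := by ring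
        _ ≤ (η s * (∏ r ∈ Finset.Icc (s + 1) t, (1 - 2 * η r * K0)) *
              (Ct1 * Δ s + (vk + K0) * Δ (s - 1))) * (κ * η s) := by
            exact mul_le_mul_of_nonneg_left hκs
              (mul_nonneg (mul_nonneg hbnn hP2nn) hXnn)
        _ = (κ * η s * (Ct1 * Δ s + (vk + K0) * Δ (s - 1))) *
              (η s * ∏ r ∈ Finset.Icc (s + 1) t, (1 - 2 * η r * K0)) := by ring
        _ ≤ (κ * η s * (Ct1 * Δ s + (vk + K0) * Δ (s - 1))) *
              (η t * ∏ r ∈ Finset.Icc (s + 1) t, (1 - K0 * η r)) := by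
            exact mul_le_mul_of_nonneg_left hAs (mul_nonneg hκbnn hXnn)
        _ = (κ * η s * η t * ∏ r ∈ Finset.Icc (s + 1) t, (1 - K0 * η r)) *
              (Ct1 * Δ s + (vk + K0) * Δ (s - 1)) := by ring
        _ ≤ (κ * η s * η t * ∏ r ∈ Finset.Icc (s + 1) t, (1 - K0 * η r)) *
              ((Ct1 + (vk + K0)) * M) := by
            exact mul_le_mul_of_nonneg_left hbX
              (mul_nonneg (mul_nonneg hκbnn (hηpos t ht).le) hP1nn)
        _ = κ * (Ct1 + (vk + K0)) * M * η t *
              (η s * ∏ r ∈ Finset.Icc (s+1) t, (1 - K0 * η r)) := by ring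
    rw [← Finset.mul_sum] at hsum1
    have hcnn : 0 ≤ κ * (Ct1 + (vk + K0)) * M * η t := by
      have : (0:ℝ) ≤ Ct1 + (vk + K0) := by linarith
      exact mul_nonneg (mul_nonneg (mul_nonneg (by linarith) this) hM) (hηpos t ht).le
    have hsum2 : κ * (Ct1 + (vk + K0)) * M * η t *
          (∑ s ∈ Finset.Icc 2 t, η s * ∏ r ∈ Finset.Icc (s+1) t, (1 - K0 * η r))
        ≤ κ * (Ct1 + (vk + K0)) * M * η t * (1 / K0) :=
      mul_le_mul_of_nonneg_left (hB t ht) hcnn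
    have h1 : (∏ s ∈ Finset.Icc 1 t, (1 - 2 * η s * K0)) * Ct0
        ≤ (∏ s ∈ Finset.Icc 2 t, (1 - K0 * η s)) * Ct0 :=
      mul_le_mul_of_nonneg_right (hG1le t ht) hCt0
    have h2 : η t * (Δ t + Ct3) ≤ η t * (M + Ct3) :=
      mul_le_mul_of_nonneg_left (by linarith [hsM t ht le_rfl]) (hηpos t ht).le
    have e : κ * (Ct1 + (vk + K0)) * M * η t * (1 / K0) + η t * (M + Ct3)
        = (κ * (Ct1 + (vk + K0)) * M / K0 + M + Ct3) * η t := by ring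
    linarith
  -- boundedness
  have hXpos : 0 < κ * (Ct1 + (vk + K0)) + K0 := by nlinarith
  set ε : ℝ := K0 / (2 * (κ * (Ct1 + (vk + K0)) + K0)) with hεdef
  have hε : 0 < ε := div_pos hK0 (by linarith)
  have hεcoef : (κ * (Ct1 + (vk + K0)) / K0 + 1) * ε = 1/2 := by
    rw [hεdef]
    field_simp
  have hqnn : 0 ≤ κ * (Ct1 + (vk + K0)) / K0 :=
    div_nonneg (mul_nonneg (by linarith) (by linarith)) hK0.le
  have hεhalf : ε ≤ 1/2 := by nlinarith [mul_nonneg hqnn hε.le]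
  obtain ⟨N, hN⟩ : ∃ N : ℕ, ∀ t ≥ N, η (t+1)^2 < ε^2 := by
    have h0 := hsum.tendsto_atTop_zero
    have h1 : ∀ᶠ t in Filter.atTop, η (t+1)^2 < ε^2 :=
      h0.eventually (gt_mem_nhds (by positivity))
    exact Filter.eventually_atTop.mp h1
  have hηsmall : ∀ t, N + 1 ≤ t → η t ≤ ε := by
    intro t htN
    have h1 : η t ≤ η (N+1) := hmono2 (N+1) t (by omega) htN
    have h2 : η (N+1)^2 < ε^2 := hN N le_rfl
    have h3 : η (N+1) < ε := lt_of_pow_lt_pow_left₀ 2 hε.le h2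
    linarith
  set B0 : ℝ := ∑ s ∈ Finset.Icc 1 (N+1), Δ s with hB0def
  have hB0nn : 0 ≤ B0 :=
    Finset.sum_nonneg fun s hs => hΔnn s (Finset.mem_Icc.mp hs).1
  set B : ℝ := B0 + 2 * (Ct0 + Ct3) with hBdef
  have hBnn : 0 ≤ B := by positivity
  have hBge : ∀ s, 1 ≤ s → s ≤ N + 1 → Δ s ≤ B := by
    intro s hs1 hs2
    have h1 : Δ s ≤ B0 :=
      Finset.single_le_sum (fun i hi => hΔnn i (Finset.mem_Icc.mp hi).1)
        (Finset.mem_Icc.mpr ⟨hs1, hs2⟩)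
    have : (0:ℝ) ≤ 2 * (Ct0 + Ct3) := by linarith
    linarith [hBdef]
  have hbound : ∀ t, 1 ≤ t → Δ t ≤ B := by
    intro t
    induction t using Nat.strong_induction_on with
    | _ t ih =>
      intro ht
      by_cases hc : t ≤ N + 1
      · exact hBge t ht hc
      · obtain ⟨u, rfl⟩ : ∃ u, t = u + 1 := ⟨t - 1, by omega⟩
        have hu1 : 1 ≤ u := by omega
        have hm := hmaster u hu1 B hBnn (fun s hs1 hs2 => ih s (by omega) hs1)
        have hηu : η u ≤ ε := hηsmall u (by omega)
        have hηu0 : 0 ≤ η u := (hηpos u hu1).le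
        have hP := hP1le1 u
        have hPnn : 0 ≤ ∏ s ∈ Finset.Icc 2 u, (1 - K0 * η s) := (hP1pos 2 u (by norm_num)).le
        have hPCt0 : (∏ s ∈ Finset.Icc 2 u, (1 - K0 * η s)) * Ct0 ≤ Ct0 := by
          nlinarith
        have h6 : (κ * (Ct1 + (vk + K0)) / K0 + 1) * η u ≤ 1/2 := by
          nlinarith [mul_le_mul_of_nonneg_left hηu (by linarith : (0:ℝ) ≤ κ * (Ct1 + (vk + K0)) / K0 + 1)]
        have h5 : (κ * (Ct1 + (vk + K0)) * B / K0 + B + Ct3) * η u ≤ B/2 + Ct3 := by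
          have e : (κ * (Ct1 + (vk + K0)) * B / K0 + B + Ct3) * η u
              = B * ((κ * (Ct1 + (vk + K0)) / K0 + 1) * η u) + Ct3 * η u := by ring
          rw [e]
          have hh1 : B * ((κ * (Ct1 + (vk + K0)) / K0 + 1) * η u) ≤ B * (1/2) :=
            mul_le_mul_of_nonneg_left h6 hBnn
          have hh2 : Ct3 * η u ≤ Ct3 * 1 :=
            mul_le_mul_of_nonneg_left (by linarith [hηub u hu1]) hCt3
          linarith
        have hB0nn' : 0 ≤ B0 := hB0nn
        have : Δ (u+1) ≤ Ct0 + (B/2 + Ct3) := by linarith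
        have hfin : Ct0 + (B/2 + Ct3) ≤ B := by
          rw [hBdef]; linarith
        linarith
  refine ⟨⟨B, hbound⟩, ?_⟩
  refine ⟨κ * (Ct1 + (vk + K0)) * B / K0 + B + Ct3 + (Ct0 - Δ 1) / η 1, ?_⟩
  intro t ht
  have hm := hmaster t ht B hBnn (fun s hs1 _ => hbound s hs1)
  have hCt := hC t ht
  have hPnn : 0 ≤ ∏ s ∈ Finset.Icc 2 t, (1 - K0 * η s) := (hP1pos 2 t (by norm_num)).le
  have h1 : (∏ s ∈ Finset.Icc 2 t, (1 - K0 * η s)) * (Ct0 - Δ 1)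
      ≤ (η t / η 1) * (Ct0 - Δ 1) :=
    mul_le_mul_of_nonneg_right hCt (by linarith)
  have h2 : (η t / η 1) * (Ct0 - Δ 1) = ((Ct0 - Δ 1) / η 1) * η t := by ring
  rw [h2] at h1
  linarith [hm, h1]
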